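/- arXiv:2106.10842 — 3 statements merged into one kernel-verified Lean document; each statement's English description precedes it below -/
import Mathlib

section
/- The Ramanujan identity (6/(iπ)) E₂' = E₂² − E₄ holds on the upper half-plane, where E₂(τ) = 1 − 24 Σ_{n≥1} σ₁(n) qⁿ and E₄(τ) = 1 + 240 Σ_{n≥1} σ₃(n) qⁿ with q = e^{2πiτ}. -/
open Finset Complex Real

namespace RamanujanAux

/-- Solutions of `a*x + b*y = n` in positive integers, as `(a,x,b,y)`. -/
def S (n : ℕ) : Finset (ℕ × ℕ × ℕ × ℕ) :=
  ((Icc 1 n ×ˢ Icc 1 n ×ˢ Icc 1 n ×ˢ Icc 1 n).filter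
    fun p => p.1 * p.2.1 + p.2.2.1 * p.2.2.2 = n)

lemma mem_S {n : ℕ} {p : ℕ × ℕ × ℕ × ℕ} :
    p ∈ S n ↔ 0 < p.1 ∧ 0 < p.2.1 ∧ 0 < p.2.2.1 ∧ 0 < p.2.2.2 ∧
      p.1 * p.2.1 + p.2.2.1 * p.2.2.2 = n := by
  obtain ⟨a, x, b, y⟩ := p
  simp only [S, mem_filter, mem_product, mem_Icc]
  constructor
  · rintro ⟨⟨⟨ha1, _⟩, ⟨hx1, _⟩, ⟨hb1, _⟩, ⟨hy1, _⟩⟩, h⟩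
    exact ⟨ha1, hx1, hb1, hy1, h⟩
  · rintro ⟨ha, hx, hb, hy, h⟩
    refine ⟨⟨⟨ha, ?_⟩, ⟨hx, ?_⟩, ⟨hb, ?_⟩, ⟨hy, ?_⟩⟩, h⟩ <;> nlinarith

/-- Liouville's bijection: `(a,x,b,y)` with `x>y` maps to `(a, x-y, a+b, y)`,
a solution with `a < b`. -/
lemma sum_bij_xy (n : ℕ) (F : ℕ → ℕ → ℤ) :
    ∑ p ∈ (S n).filter (fun p => p.2.2.2 < p.2.1), F p.1 p.2.2.1
      = ∑ p ∈ (S n).filter (fun p => p.1 < p.2.2.1), F p.1 (p.2.2.1 - p.1) := by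
  refine Finset.sum_nbij'
    (i := fun p => (p.1, p.2.1 - p.2.2.2, p.1 + p.2.2.1, p.2.2.2))
    (j := fun p => (p.1, p.2.1 + p.2.2.2, p.2.2.1 - p.1, p.2.2.2))
    ?_ ?_ ?_ ?_ ?_
  · rintro ⟨a, x, b, y⟩ hp
    simp only [mem_filter, mem_S] at hp ⊢
    obtain ⟨⟨ha, hx, hb, hy, he⟩, hlt⟩ := hp
    refine ⟨⟨ha, by omega, by omega, hy, ?_⟩, by omega⟩
    zify [hlt.le] at he ⊢
    linear_combination he
  · rintro ⟨a, x, b, y⟩ hp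
    simp only [mem_filter, mem_S] at hp ⊢
    obtain ⟨⟨ha, hx, hb, hy, he⟩, hlt⟩ := hp
    refine ⟨⟨ha, by omega, by omega, hy, ?_⟩, by omega⟩
    zify [hlt.le] at he ⊢
    linear_combination he
  · rintro ⟨a, x, b, y⟩ hp
    simp only [mem_filter, mem_S] at hp
    obtain ⟨⟨ha, hx, hb, hy, he⟩, hlt⟩ := hp
    simp only [Prod.mk.injEq, true_and, and_true]
    constructor <;> omega
  · rintro ⟨a, x, b, y⟩ hp
    simp only [mem_filter, mem_S] at hp
    obtain ⟨⟨ha, hx, hb, hy, he⟩, hlt⟩ := hp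
    simp only [Prod.mk.injEq, true_and, and_true]
    constructor <;> omega
  · rintro ⟨a, x, b, y⟩ hp
    simp only [mem_filter, mem_S] at hp
    obtain ⟨⟨ha, hx, hb, hy, he⟩, hlt⟩ := hp
    simp only
    congr 1
    omega

/-- The swap `(a,x,b,y) ↦ (b,y,a,x)` leaves `S n` invariant. -/
lemma sum_swap (n : ℕ) (w : ℕ × ℕ × ℕ × ℕ → ℤ) (P : ℕ × ℕ × ℕ × ℕ → Prop)
    [DecidablePred P] :
    ∑ p ∈ (S n).filter P, w p
      = ∑ p ∈ (S n).filter (fun p => P (p.2.2.1, p.2.2.2, p.1, p.2.1)),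
          w (p.2.2.1, p.2.2.2, p.1, p.2.1) := by
  refine Finset.sum_nbij'
    (i := fun p => (p.2.2.1, p.2.2.2, p.1, p.2.1))
    (j := fun p => (p.2.2.1, p.2.2.2, p.1, p.2.1)) ?_ ?_ ?_ ?_ ?_ <;>
    rintro ⟨a, x, b, y⟩ hp <;>
    simp only [mem_filter, mem_S] at hp ⊢ <;> try rfl
  · obtain ⟨⟨ha, hx, hb, hy, he⟩, hP⟩ := hp
    exact ⟨⟨hb, hy, ha, hx, by omega⟩, hP⟩
  · obtain ⟨⟨ha, hx, hb, hy, he⟩, hP⟩ := hp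
    exact ⟨⟨hb, hy, ha, hx, by omega⟩, hP⟩

/-- Diagonal `x = y`: these are `(a, n/d, d-a, n/d)` for `d ∣ n`, `1 ≤ a < d`. -/
lemma sum_diag_xy (n : ℕ) (F : ℕ → ℕ → ℤ) :
    ∑ p ∈ (S n).filter (fun p => p.2.2.2 = p.2.1), F p.1 p.2.2.1
      = ∑ d ∈ n.divisors, ∑ a ∈ Ico 1 d, F a (d - a) := by
  rw [Finset.sum_sigma' n.divisors (fun d => Ico 1 d) (fun d a => F a (d - a))]
  refine Finset.sum_nbij'
    (i := fun p => (⟨p.1 + p.2.2.1, p.1⟩ : Σ _ : ℕ, ℕ))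
    (j := fun q => (q.2, n / q.1, q.1 - q.2, n / q.1)) ?_ ?_ ?_ ?_ ?_
  · rintro ⟨a, x, b, y⟩ hp
    simp only [mem_filter, mem_S] at hp
    obtain ⟨⟨ha, hx, hb, hy, he⟩, hd⟩ := hp
    subst hd
    have he' : (a + b) * y = n := by rw [Nat.add_mul]; omega
    have hpos : 0 < (a + b) * y := Nat.mul_pos (by omega) hy
    simp only [mem_sigma, Nat.mem_divisors, mem_Ico]
    exact ⟨⟨⟨y, he'.symm⟩, by omega⟩, ha, by omega⟩
  · rintro ⟨d, a⟩ hq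
    simp only [mem_sigma, Nat.mem_divisors, mem_Ico] at hq
    obtain ⟨⟨hd, hn0⟩, ha1, had⟩ := hq
    have hd0 : 0 < d := by omega
    have hnd : 0 < n / d := Nat.div_pos (Nat.le_of_dvd (Nat.pos_of_ne_zero hn0) hd) hd0
    simp only [mem_filter, mem_S]
    refine ⟨⟨ha1, hnd, by omega, hnd, ?_⟩, trivial⟩
    have h : d * (n / d) = n := Nat.mul_div_cancel' hd
    zify [had.le] at h ⊢
    linear_combination h
  · rintro ⟨a, x, b, y⟩ hp
    simp only [mem_filter, mem_S] at hp
    obtain ⟨⟨ha, hx, hb, hy, he⟩, hd⟩ := hp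
    subst hd
    have he' : (a + b) * y = n := by rw [Nat.add_mul]; omega
    have hnd : n / (a + b) = y := by
      rw [← he', Nat.mul_div_cancel_left _ (by omega)]
    simp only [Prod.mk.injEq, true_and]
    exact ⟨hnd, by omega, hnd⟩
  · rintro ⟨d, a⟩ hq
    simp only [mem_sigma, Nat.mem_divisors, mem_Ico] at hq
    obtain ⟨⟨hd, hn0⟩, ha1, had⟩ := hq
    simp only
    rw [show a + (d - a) = d from by omega]
  · rintro ⟨a, x, b, y⟩ hp
    simp only
    congr 1
    omega

/-- Diagonal `a = b`: these are `(d, x, d, n/d - x)` for `d ∣ n`, `1 ≤ x < n/d`. -/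
lemma sum_diag_ab (n : ℕ) (F : ℕ → ℕ → ℤ) :
    ∑ p ∈ (S n).filter (fun p => p.2.2.1 = p.1), F p.1 p.2.2.1
      = ∑ d ∈ n.divisors, ∑ _x ∈ Ico 1 (n / d), F d d := by
  rw [Finset.sum_sigma' n.divisors (fun d => Ico 1 (n / d)) (fun d _ => F d d)]
  refine Finset.sum_nbij'
    (i := fun p => (⟨p.1, p.2.1⟩ : Σ _ : ℕ, ℕ))
    (j := fun q => (q.1, q.2, q.1, n / q.1 - q.2)) ?_ ?_ ?_ ?_ ?_
  · rintro ⟨a, x, b, y⟩ hp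
    simp only [mem_filter, mem_S] at hp
    obtain ⟨⟨ha, hx, hb, hy, he⟩, hd⟩ := hp
    subst hd
    have he' : b * (x + y) = n := by rw [Nat.mul_add]; omega
    have hnd : n / b = x + y := by
      rw [← he', Nat.mul_div_cancel_left _ (by omega)]
    have hpos : 0 < b * (x + y) := Nat.mul_pos hb (by omega)
    simp only [mem_sigma, Nat.mem_divisors, mem_Ico]
    exact ⟨⟨⟨x + y, he'.symm⟩, by omega⟩, hx, by rw [hnd]; omega⟩
  · rintro ⟨d, x⟩ hq
    simp only [mem_sigma, Nat.mem_divisors, mem_Ico] at hq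
    obtain ⟨⟨hd, hn0⟩, hx1, hxd⟩ := hq
    have hd0 : 0 < d := by
      rcases Nat.eq_zero_or_pos d with h | h
      · subst h; rw [Nat.div_zero] at hxd; omega
      · exact h
    simp only [mem_filter, mem_S]
    refine ⟨⟨hd0, hx1, hd0, by omega, ?_⟩, trivial⟩
    have h : d * (n / d) = n := Nat.mul_div_cancel' hd
    zify [hxd.le] at h ⊢
    linear_combination h
  · rintro ⟨a, x, b, y⟩ hp
    simp only [mem_filter, mem_S] at hp
    obtain ⟨⟨ha, hx, hb, hy, he⟩, hd⟩ := hp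
    subst hd
    have he' : b * (x + y) = n := by rw [Nat.mul_add]; omega
    have hnd : n / b = x + y := by
      rw [← he', Nat.mul_div_cancel_left _ (by omega)]
    simp only [Prod.mk.injEq, true_and]
    rw [hnd]; omega
  · rintro ⟨d, x⟩ hq
    rfl
  · rintro ⟨a, x, b, y⟩ hp
    simp only [mem_filter, mem_S] at hp
    obtain ⟨⟨ha, hx, hb, hy, he⟩, hd⟩ := hp
    subst hd
    rfl



lemma inner_sq (d : ℕ) : 6 * ∑ a ∈ range d, (a : ℤ) ^ 2
    = (d : ℤ) * ((d : ℤ) - 1) * (2 * (d : ℤ) - 1) := by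
  induction d with
  | zero => simp
  | succ d ih =>
    rw [Finset.sum_range_succ]
    push_cast
    linear_combination ih

lemma inner_id (d : ℕ) : 2 * ∑ a ∈ range d, (a : ℤ) = (d : ℤ) * ((d : ℤ) - 1) := by
  induction d with
  | zero => simp
  | succ d ih =>
    rw [Finset.sum_range_succ]
    push_cast
    linear_combination ih

lemma Ico_eq_range_sum (d : ℕ) (h : ℕ → ℤ) (h0 : h 0 = 0) :
    ∑ a ∈ Ico 1 d, h a = ∑ a ∈ range d, h a := by
  apply Finset.sum_subset
  · intro a ha
    simp only [mem_Ico] at ha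
    simp only [mem_range]
    omega
  · intro a ha hna
    simp only [mem_range] at ha
    simp only [mem_Ico] at hna
    have : a = 0 := by omega
    rw [this, h0]

lemma inner1 (d : ℕ) :
    6 * ∑ a ∈ Ico 1 d, ((a : ℤ) * ((d - a : ℕ) : ℤ)) = (d : ℤ) ^ 3 - (d : ℤ) := by
  have h1 : ∑ a ∈ Ico 1 d, ((a : ℤ) * ((d - a : ℕ) : ℤ))
      = ∑ a ∈ Ico 1 d, ((a : ℤ) * ((d : ℤ) - (a : ℤ))) := by
    apply Finset.sum_congr rfl
    intro a ha
    simp only [mem_Ico] at ha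
    rw [Nat.cast_sub ha.2.le]
  have h2 : ∑ a ∈ Ico 1 d, ((a : ℤ) * ((d : ℤ) - (a : ℤ)))
      = ∑ a ∈ range d, ((a : ℤ) * ((d : ℤ) - (a : ℤ))) :=
    Ico_eq_range_sum d _ (by simp)
  have h3 : ∑ a ∈ range d, ((a : ℤ) * ((d : ℤ) - (a : ℤ)))
      = (d : ℤ) * ∑ a ∈ range d, (a : ℤ) - ∑ a ∈ range d, (a : ℤ) ^ 2 := by
    rw [Finset.mul_sum, ← Finset.sum_sub_distrib]
    apply Finset.sum_congr rfl
    intro a _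
    ring
  rw [h1, h2, h3]
  linear_combination 3 * (d : ℤ) * inner_id d - inner_sq d

lemma inner2 (d : ℕ) :
    6 * ∑ a ∈ Ico 1 d, (a : ℤ) ^ 2
      = 2 * (d : ℤ) ^ 3 - 3 * (d : ℤ) ^ 2 + (d : ℤ) := by
  rw [Ico_eq_range_sum d _ (by simp)]
  linear_combination inner_sq d

lemma sum_const_Ico (n : ℕ) (hn : 0 < n) (h : ℕ → ℤ) :
    ∑ d ∈ n.divisors, ∑ _x ∈ Ico 1 (n / d), h d
      = ∑ d ∈ n.divisors, (((n / d : ℕ) : ℤ) - 1) * h d := by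
  apply Finset.sum_congr rfl
  intro d hd
  obtain ⟨hdvd, hn0⟩ := Nat.mem_divisors.mp hd
  have hd0 : 0 < d := Nat.pos_of_mem_divisors hd
  have h1 : 1 ≤ n / d := (Nat.one_le_div_iff hd0).mpr (Nat.le_of_dvd hn hdvd)
  rw [Finset.sum_const, Nat.card_Ico, nsmul_eq_mul, Nat.cast_sub h1, Nat.cast_one]

/-- Besge's identity, Liouville-style proof. -/
lemma besge (n : ℕ) (hn : 0 < n) :
    12 * ∑ p ∈ S n, (p.1 : ℤ) * p.2.2.1
      = 5 * ∑ d ∈ n.divisors, (d : ℤ) ^ 3 + ∑ d ∈ n.divisors, (d : ℤ)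
        - 6 * n * ∑ d ∈ n.divisors, (d : ℤ) := by
  classical
  set Z1 := ∑ d ∈ n.divisors, (d : ℤ) with hZ1
  set Z2 := ∑ d ∈ n.divisors, (d : ℤ) ^ 2 with hZ2
  set Z3 := ∑ d ∈ n.divisors, (d : ℤ) ^ 3 with hZ3
  set T := (S n).filter (fun p => p.1 < p.2.2.1) with hT
  set AB := ∑ p ∈ T, (p.1 : ℤ) * p.2.2.1 with hAB
  set A2 := ∑ p ∈ T, (p.1 : ℤ) ^ 2 with hA2
  set B2 := ∑ p ∈ T, (p.2.2.1 : ℤ) ^ 2 with hB2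
  have hsub : ∀ p ∈ T, ((p.2.2.1 - p.1 : ℕ) : ℤ) = (p.2.2.1 : ℤ) - p.1 := by
    intro p hp
    rw [hT, mem_filter] at hp
    exact Nat.cast_sub hp.2.le
  -- generic trichotomy split
  have split : ∀ (w : ℕ × ℕ × ℕ × ℕ → ℤ) (f g : ℕ × ℕ × ℕ × ℕ → ℕ),
      ∑ p ∈ S n, w p = ∑ p ∈ (S n).filter (fun p => g p < f p), w p
        + ∑ p ∈ (S n).filter (fun p => f p < g p), w p
        + ∑ p ∈ (S n).filter (fun p => f p = g p), w p := by
    intro w f g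
    rw [← Finset.sum_filter_add_sum_filter_not (S n) (fun p => g p < f p) w]
    rw [← Finset.sum_filter_add_sum_filter_not ((S n).filter (fun p => ¬ g p < f p))
      (fun p => f p < g p) w, Finset.filter_filter, Finset.filter_filter, add_assoc]
    congr 1
    congr 1
    · exact Finset.sum_congr (Finset.filter_congr fun p _ => by omega) fun _ _ => rfl
    · exact Finset.sum_congr (Finset.filter_congr fun p _ => by omega) fun _ _ => rfl
  -- e1a : sum over y<x of a*b
  have e1a : ∑ p ∈ (S n).filter (fun p => p.2.2.2 < p.2.1), (p.1 : ℤ) * p.2.2.1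
      = AB - A2 := by
    rw [sum_bij_xy n (fun a b => (a : ℤ) * b), ← hT]
    rw [hAB, hA2, ← Finset.sum_sub_distrib]
    refine Finset.sum_congr rfl fun p hp => ?_
    rw [hsub p hp]; ring
  -- e1b : sum over x<y of a*b, via swap then bijection
  have e1b : ∑ p ∈ (S n).filter (fun p => p.2.1 < p.2.2.2), (p.1 : ℤ) * p.2.2.1
      = AB - A2 := by
    rw [sum_swap n _ (fun p => p.2.1 < p.2.2.2)]
    simp only
    rw [sum_bij_xy n (fun a b => (b : ℤ) * a), ← hT]
    rw [hAB, hA2, ← Finset.sum_sub_distrib]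
    refine Finset.sum_congr rfl fun p hp => ?_
    rw [hsub p hp]; ring
  -- e1c : diagonal x=y
  have e1c : ∑ p ∈ (S n).filter (fun p => p.2.2.2 = p.2.1), (p.1 : ℤ) * p.2.2.1
      = ∑ d ∈ n.divisors, ∑ a ∈ Ico 1 d, ((a : ℤ) * ((d - a : ℕ) : ℤ)) :=
    sum_diag_xy n (fun a b => (a : ℤ) * b)
  have e1cval : 6 * ∑ d ∈ n.divisors, ∑ a ∈ Ico 1 d, ((a : ℤ) * ((d - a : ℕ) : ℤ))
      = Z3 - Z1 := by
    have h : Z3 - Z1 = ∑ d ∈ n.divisors, ((d : ℤ) ^ 3 - (d : ℤ)) := by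
      rw [hZ3, hZ1, ← Finset.sum_sub_distrib]
    rw [h, Finset.mul_sum]
    exact Finset.sum_congr rfl fun d _ => inner1 d
  -- e2a : sum over b<a of a*b
  have e2a : ∑ p ∈ (S n).filter (fun p => p.2.2.1 < p.1), (p.1 : ℤ) * p.2.2.1
      = AB := by
    rw [sum_swap n _ (fun p => p.2.2.1 < p.1)]
    simp only
    rw [← hT, hAB]
    exact Finset.sum_congr rfl fun p _ => by ring
  -- e2c : diagonal a=b
  have e2c : ∑ p ∈ (S n).filter (fun p => p.2.2.1 = p.1), (p.1 : ℤ) * p.2.2.1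
      = n * Z1 - Z2 := by
    rw [sum_diag_ab n (fun a b => (a : ℤ) * b), sum_const_Ico n hn]
    have h : (n : ℤ) * Z1 - Z2 = ∑ d ∈ n.divisors, ((n : ℤ) * d - (d : ℤ) ^ 2) := by
      rw [hZ1, hZ2, Finset.mul_sum, ← Finset.sum_sub_distrib]
    rw [h]
    refine Finset.sum_congr rfl fun d hd => ?_
    obtain ⟨hdvd, hn0⟩ := Nat.mem_divisors.mp hd
    have hc : ((n / d : ℕ) : ℤ) * (d : ℤ) = (n : ℤ) := by
      rw [← Nat.cast_mul, Nat.div_mul_cancel hdvd]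
    linear_combination (d : ℤ) * hc
  -- e3a : sum over y<x of a^2
  have e3a : ∑ p ∈ (S n).filter (fun p => p.2.2.2 < p.2.1), (p.1 : ℤ) ^ 2
      = A2 := by
    rw [sum_bij_xy n (fun a _ => (a : ℤ) ^ 2), ← hT]
  -- e3b : sum over x<y of a^2
  have e3b : ∑ p ∈ (S n).filter (fun p => p.2.1 < p.2.2.2), (p.1 : ℤ) ^ 2
      = B2 - 2 * AB + A2 := by
    rw [sum_swap n _ (fun p => p.2.1 < p.2.2.2)]
    simp only
    rw [sum_bij_xy n (fun _ b => (b : ℤ) ^ 2), ← hT]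
    have h : B2 - 2 * AB + A2
        = ∑ p ∈ T, ((p.2.2.1 : ℤ) ^ 2 - 2 * ((p.1 : ℤ) * p.2.2.1) + (p.1 : ℤ) ^ 2) := by
      rw [hB2, hAB, hA2, Finset.mul_sum, ← Finset.sum_sub_distrib, ← Finset.sum_add_distrib]
    rw [h]
    refine Finset.sum_congr rfl fun p hp => ?_
    rw [hsub p hp]; ring
  -- e3c : diagonal x=y for a^2
  have e3c : ∑ p ∈ (S n).filter (fun p => p.2.2.2 = p.2.1), (p.1 : ℤ) ^ 2
      = ∑ d ∈ n.divisors, ∑ a ∈ Ico 1 d, (a : ℤ) ^ 2 :=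
    sum_diag_xy n (fun a _ => (a : ℤ) ^ 2)
  have e3cval : 6 * ∑ d ∈ n.divisors, ∑ a ∈ Ico 1 d, (a : ℤ) ^ 2
      = 2 * Z3 - 3 * Z2 + Z1 := by
    have h : 2 * Z3 - 3 * Z2 + Z1
        = ∑ d ∈ n.divisors, (2 * (d : ℤ) ^ 3 - 3 * (d : ℤ) ^ 2 + d) := by
      rw [hZ3, hZ2, hZ1, Finset.mul_sum, Finset.mul_sum, ← Finset.sum_sub_distrib,
        ← Finset.sum_add_distrib]
    rw [h, Finset.mul_sum]
    exact Finset.sum_congr rfl fun d _ => inner2 d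
  -- e4a : sum over b<a of a^2
  have e4a : ∑ p ∈ (S n).filter (fun p => p.2.2.1 < p.1), (p.1 : ℤ) ^ 2
      = B2 := by
    rw [sum_swap n _ (fun p => p.2.2.1 < p.1)]
  -- e4c : diagonal a=b for a^2
  have e4c : ∑ p ∈ (S n).filter (fun p => p.2.2.1 = p.1), (p.1 : ℤ) ^ 2
      = n * Z1 - Z2 := by
    rw [sum_diag_ab n (fun a _ => (a : ℤ) ^ 2), sum_const_Ico n hn]
    have h : (n : ℤ) * Z1 - Z2 = ∑ d ∈ n.divisors, ((n : ℤ) * d - (d : ℤ) ^ 2) := by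
      rw [hZ1, hZ2, Finset.mul_sum, ← Finset.sum_sub_distrib]
    rw [h]
    refine Finset.sum_congr rfl fun d hd => ?_
    obtain ⟨hdvd, hn0⟩ := Nat.mem_divisors.mp hd
    have hc : ((n / d : ℕ) : ℤ) * (d : ℤ) = (n : ℤ) := by
      rw [← Nat.cast_mul, Nat.div_mul_cancel hdvd]
    linear_combination (d : ℤ) * hc
  -- assemble
  have s1 := split (fun p => (p.1 : ℤ) * p.2.2.1) (fun p => p.2.2.2) (fun p => p.2.1)
  have s2 := split (fun p => (p.1 : ℤ) * p.2.2.1) (fun p => p.2.2.1) (fun p => p.1)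
  have s3 := split (fun p => (p.1 : ℤ) ^ 2) (fun p => p.2.2.2) (fun p => p.2.1)
  have s4 := split (fun p => (p.1 : ℤ) ^ 2) (fun p => p.2.2.1) (fun p => p.1)
  rw [e1b, e1a, e1c] at s1
  rw [← hT, ← hAB, e2a, e2c] at s2
  rw [e3b, e3a, e3c] at s3
  rw [← hT, ← hA2, e4a, e4c] at s4
  linarith [s1, s2, s3, s4, e1cval, e3cval]

lemma sum_S_eq_conv (n : ℕ) :
    ∑ p ∈ S n, (p.1 : ℤ) * p.2.2.1
      = ∑ m ∈ Ico 1 n, ((ArithmeticFunction.sigma 1 m : ℤ)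
          * (ArithmeticFunction.sigma 1 (n - m) : ℤ)) := by
  classical
  have hmap : ∀ p ∈ S n, p.1 * p.2.1 ∈ Ico 1 n := by
    rintro ⟨a, x, b, y⟩ hp
    simp only [mem_S] at hp
    obtain ⟨ha, hx, hb, hy, he⟩ := hp
    have h1 : 0 < a * x := Nat.mul_pos ha hx
    have h2 : 0 < b * y := Nat.mul_pos hb hy
    simp only [mem_Ico]
    omega
  rw [← Finset.sum_fiberwise_of_maps_to hmap (fun p => (p.1 : ℤ) * p.2.2.1)]
  refine Finset.sum_congr rfl fun m hm => ?_
  rw [mem_Ico] at hm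
  have step : ∑ p ∈ (S n).filter (fun p => p.1 * p.2.1 = m), (p.1 : ℤ) * p.2.2.1
      = ∑ q ∈ m.divisorsAntidiagonal ×ˢ (n - m).divisorsAntidiagonal,
          (q.1.1 : ℤ) * q.2.1 := by
    refine Finset.sum_nbij'
      (i := fun p => ((p.1, p.2.1), (p.2.2.1, p.2.2.2)))
      (j := fun q => (q.1.1, q.1.2, q.2.1, q.2.2)) ?_ ?_ ?_ ?_ ?_
    · rintro ⟨a, x, b, y⟩ hp
      simp only [mem_filter, mem_S] at hp
      obtain ⟨⟨ha, hx, hb, hy, he⟩, hm'⟩ := hp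
      simp only [mem_product, Nat.mem_divisorsAntidiagonal]
      exact ⟨⟨hm', by omega⟩, by omega, by omega⟩
    · rintro ⟨⟨a, x⟩, ⟨b, y⟩⟩ hq
      simp only [mem_product, Nat.mem_divisorsAntidiagonal] at hq
      obtain ⟨⟨ham, hm0⟩, hb', hnm0⟩ := hq
      have h1 : a ≠ 0 ∧ x ≠ 0 := by
        constructor <;> (rintro rfl; simp at ham; omega)
      have h2 : b ≠ 0 ∧ y ≠ 0 := by
        constructor <;> (rintro rfl; simp at hb'; omega)
      simp only [mem_filter, mem_S]
      exact ⟨⟨by omega, by omega, by omega, by omega, by omega⟩, ham⟩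
    · rintro ⟨a, x, b, y⟩ _; rfl
    · rintro ⟨⟨a, x⟩, ⟨b, y⟩⟩ _; rfl
    · rintro ⟨a, x, b, y⟩ _; rfl
  rw [step, Finset.sum_product]
  simp only
  rw [← Finset.sum_mul_sum]
  have l1 : ∀ k : ℕ, ∑ u ∈ k.divisorsAntidiagonal, (u.1 : ℤ)
      = (ArithmeticFunction.sigma 1 k : ℤ) := by
    intro k
    rw [ArithmeticFunction.sigma_one_apply, Nat.cast_sum,
      ← Nat.sum_divisorsAntidiagonal (fun d _ => (d : ℤ))]
  rw [l1 m, l1 (n - m)]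

/-- The key coefficient identity. -/
lemma key (n : ℕ) (hn : 0 < n) :
    576 * ∑ m ∈ Ico 1 n, ((ArithmeticFunction.sigma 1 m : ℤ)
        * (ArithmeticFunction.sigma 1 (n - m) : ℤ))
      + 288 * n * (ArithmeticFunction.sigma 1 n : ℤ)
      = 240 * (ArithmeticFunction.sigma 3 n : ℤ)
        + 48 * (ArithmeticFunction.sigma 1 n : ℤ) := by
  have hb := besge n hn
  rw [sum_S_eq_conv n] at hb
  have hσ1 : (ArithmeticFunction.sigma 1 n : ℤ) = ∑ d ∈ n.divisors, (d : ℤ) := by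
    rw [ArithmeticFunction.sigma_one_apply, Nat.cast_sum]
  have hσ3 : (ArithmeticFunction.sigma 3 n : ℤ) = ∑ d ∈ n.divisors, (d : ℤ) ^ 3 := by
    rw [ArithmeticFunction.sigma_apply, Nat.cast_sum]
    push_cast
    rfl
  rw [hσ1, hσ3]
  linarith [hb]

end RamanujanAux

namespace Rama2

local notation "σ" => ArithmeticFunction.sigma

-- bound on sigma
lemma sigma_le (k n : ℕ) : (σ k n : ℝ) ≤ (n : ℝ) ^ (k + 1) := by
  have h : σ k n ≤ n ^ (k + 1) := by
    rcases Nat.eq_zero_or_pos n with rfl | hn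
    · simp
    calc σ k n = ∑ d ∈ n.divisors, d ^ k := ArithmeticFunction.sigma_apply
      _ ≤ ∑ _d ∈ n.divisors, n ^ k := by
          refine Finset.sum_le_sum fun d hd => Nat.pow_le_pow_left ?_ k
          exact Nat.divisor_le hd
      _ = n.divisors.card * n ^ k := by rw [Finset.sum_const, smul_eq_mul]
      _ ≤ n * n ^ k := by
          refine Nat.mul_le_mul_right _ ?_
          calc n.divisors.card ≤ (Finset.Icc 1 n).card := by
                refine Finset.card_le_card fun d hd => ?_
                rw [Finset.mem_Icc]
                exact ⟨Nat.pos_of_mem_divisors hd, Nat.divisor_le hd⟩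
            _ = n := by rw [Nat.card_Icc]; omega
      _ = n ^ (k + 1) := by ring
  calc (σ k n : ℝ) ≤ ((n ^ (k + 1) : ℕ) : ℝ) := by exact_mod_cast h
    _ = (n : ℝ) ^ (k + 1) := by push_cast; ring

lemma norm_q_lt_one {z : ℂ} (hz : 0 < z.im) : ‖Complex.exp (2 * π * I * z)‖ < 1 := by
  have hre : (2 * (π : ℂ) * I * z).re = -(2 * π * z.im) := by
    simp [Complex.mul_re, Complex.mul_im]
  rw [Complex.norm_exp, hre]
  rw [Real.exp_lt_one_iff]
  have : 0 < 2 * π * z.im := by positivity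
  linarith

lemma norm_q_eq (z : ℂ) : ‖Complex.exp (2 * π * I * z)‖ = Real.exp (-(2 * π * z.im)) := by
  have hre : (2 * (π : ℂ) * I * z).re = -(2 * π * z.im) := by
    simp [Complex.mul_re, Complex.mul_im]
  rw [Complex.norm_exp, hre]

-- general summability with polynomial coefficients
lemma summable_coeff_geo (k : ℕ) {r : ℝ} (h0 : 0 ≤ r) (hr : r < 1) :
    Summable (fun n : ℕ => (n : ℝ) ^ k * r ^ n) := by
  have := summable_pow_mul_geometric_of_norm_lt_one (R := ℝ) k
    (r := r) (by rwa [Real.norm_eq_abs, _root_.abs_of_nonneg h0])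
  exact this

lemma summable_sigma_mul (k j : ℕ) {q : ℂ} (hq : ‖q‖ < 1) :
    Summable (fun n : ℕ => ‖(n : ℂ) ^ j * (σ k n : ℂ) * q ^ n‖) := by
  refine Summable.of_nonneg_of_le (fun n => norm_nonneg _) (fun n => ?_)
    ((summable_coeff_geo (j + k + 1) (norm_nonneg q) hq))
  rw [norm_mul, norm_mul, norm_pow, norm_pow]
  have h1 : ‖(n : ℂ)‖ = (n : ℝ) := by
    rw [Complex.norm_natCast]
  have h2 : ‖(σ k n : ℂ)‖ = (σ k n : ℝ) := by
    rw [Complex.norm_natCast]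
  rw [h1, h2]
  have h3 : (σ k n : ℝ) ≤ (n : ℝ) ^ (k + 1) := sigma_le k n
  have h4 : (0 : ℝ) ≤ (n : ℝ) ^ j := by positivity
  have h5 : (0 : ℝ) ≤ ‖q‖ ^ n := by positivity
  calc (n : ℝ) ^ j * (σ k n : ℝ) * ‖q‖ ^ n
      ≤ (n : ℝ) ^ j * (n : ℝ) ^ (k + 1) * ‖q‖ ^ n := by
        apply mul_le_mul_of_nonneg_right _ h5
        exact mul_le_mul_of_nonneg_left h3 h4
    _ = (n : ℝ) ^ (j + k + 1) * ‖q‖ ^ n := by rw [← pow_add]; ring_nf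

-- conversion from pnat tsum to nat tsum
lemma tsum_pnat_eq_tsum_nat (f : ℕ → ℂ) (hf : f 0 = 0) :
    ∑' n : ℕ+, f n = ∑' n : ℕ, f n := by
  refine Function.Injective.tsum_eq (fun a b h => PNat.coe_injective h) ?_
  intro n hn
  rcases Nat.eq_zero_or_pos n with rfl | h
  · exact absurd hf hn
  · exact ⟨⟨n, h⟩, rfl⟩

/-- Term-by-term derivative of the `E₂` series. -/
lemma hasDerivAt_E2sum {τ : ℂ} (hτ : 0 < τ.im) :
    HasDerivAt
      (fun z : ℂ => ∑' n : ℕ+, (σ 1 (n : ℕ) : ℂ) * Complex.exp (2 * π * I * z) ^ (n : ℕ))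
      (∑' n : ℕ+, (σ 1 (n : ℕ) : ℂ) * (2 * π * I * n)
        * Complex.exp (2 * π * I * τ) ^ (n : ℕ)) τ := by
  set t : Set ℂ := {z : ℂ | τ.im / 2 < z.im} with ht
  set ρ : ℝ := Real.exp (-(2 * π * (τ.im / 2))) with hρ
  have hρ1 : ρ < 1 := by
    rw [hρ, Real.exp_lt_one_iff]
    have : 0 < 2 * π * (τ.im / 2) := by positivity
    linarith
  have hρ0 : 0 ≤ ρ := Real.exp_nonneg _
  have hopen : IsOpen t := isOpen_lt continuous_const Complex.continuous_im
  have hconn : IsPreconnected t := (convex_halfSpace_im_gt _).isPreconnected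
  have hmem : τ ∈ t := by
    simp only [ht, Set.mem_setOf_eq]
    linarith
  have hu : Summable (fun n : ℕ+ => 2 * π * ((n : ℝ) ^ 3 * ρ ^ (n : ℕ))) :=
    ((summable_coeff_geo 3 hρ0 hρ1).mul_left (2 * π)).comp_injective PNat.coe_injective
  have hderiv : ∀ (n : ℕ+), ∀ z ∈ t,
      HasDerivAt (fun z : ℂ => (σ 1 (n : ℕ) : ℂ) * Complex.exp (2 * π * I * z) ^ (n : ℕ))
        ((σ 1 (n : ℕ) : ℂ) * (2 * π * I * n) * Complex.exp (2 * π * I * z) ^ (n : ℕ)) z := by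
    intro n z _
    have h1 : HasDerivAt (fun z : ℂ => 2 * π * I * z) (2 * π * I) z := by
      simpa using (hasDerivAt_id z).const_mul (2 * (π : ℂ) * I)
    have h4 := (h1.cexp.pow (n : ℕ)).const_mul ((σ 1 (n : ℕ) : ℂ))
    refine h4.congr_deriv ?_
    have hkey : Complex.exp (2 * π * I * z) ^ ((n : ℕ) - 1) * Complex.exp (2 * π * I * z)
        = Complex.exp (2 * π * I * z) ^ (n : ℕ) :=
      pow_sub_one_mul n.ne_zero _
    linear_combination ((σ 1 (n : ℕ) : ℂ) * (2 * π * I) * (n : ℕ)) * hkey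
  have hbound : ∀ (n : ℕ+), ∀ z ∈ t,
      ‖(σ 1 (n : ℕ) : ℂ) * (2 * π * I * n) * Complex.exp (2 * π * I * z) ^ (n : ℕ)‖
        ≤ 2 * π * ((n : ℝ) ^ 3 * ρ ^ (n : ℕ)) := by
    intro n z hz
    simp only [ht, Set.mem_setOf_eq] at hz
    have hnorm : ‖Complex.exp (2 * π * I * z)‖ ≤ ρ := by
      rw [norm_q_eq, hρ]
      apply Real.exp_le_exp.mpr
      nlinarith [Real.pi_pos]
    have h2 : ‖(2 * (π : ℂ) * I * (n : ℂ))‖ = 2 * π * (n : ℝ) := by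
      rw [norm_mul, norm_mul, norm_mul, Complex.norm_I, Complex.norm_natCast,
        Complex.norm_real, Complex.norm_two, Real.norm_eq_abs]
      rw [_root_.abs_of_nonneg Real.pi_pos.le]
      ring
    calc ‖(σ 1 (n : ℕ) : ℂ) * (2 * π * I * n) * Complex.exp (2 * π * I * z) ^ (n : ℕ)‖
        = (σ 1 (n : ℕ) : ℝ) * (2 * π * (n : ℝ)) * ‖Complex.exp (2 * π * I * z)‖ ^ (n : ℕ) := by
          rw [norm_mul, norm_mul, norm_pow, Complex.norm_natCast, h2]
      _ ≤ (n : ℝ) ^ 2 * (2 * π * (n : ℝ)) * ρ ^ (n : ℕ) := by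
          refine mul_le_mul ?_ ?_ (by positivity) (by positivity)
          · refine mul_le_mul_of_nonneg_right ?_ (by positivity)
            exact sigma_le 1 (n : ℕ)
          · exact pow_le_pow_left₀ (norm_nonneg _) hnorm _
      _ = 2 * π * ((n : ℝ) ^ 3 * ρ ^ (n : ℕ)) := by ring
  have hsum : Summable (fun n : ℕ+ => (σ 1 (n : ℕ) : ℂ)
      * Complex.exp (2 * π * I * τ) ^ (n : ℕ)) := by
    have hq : ‖Complex.exp (2 * π * I * τ)‖ < 1 := norm_q_lt_one hτ
    have h1 : Summable (fun n : ℕ => (σ 1 n : ℂ) * Complex.exp (2 * π * I * τ) ^ n) := by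
      refine Summable.of_norm (Summable.congr (summable_sigma_mul 1 0 hq) fun n => ?_)
      rw [pow_zero, one_mul]
    exact h1.comp_injective PNat.coe_injective
  exact hasDerivAt_tsum_of_isPreconnected hu hopen hconn hderiv hbound hmem hsum hmem



/-- Convolution coefficient. -/
def c (n : ℕ) : ℕ := ∑ m ∈ Ico 1 n, σ 1 m * σ 1 (n - m)

lemma conv_eq (q : ℂ) (n : ℕ) :
    ∑ kl ∈ antidiagonal n, ((σ 1 kl.1 : ℂ) * q ^ kl.1) * ((σ 1 kl.2 : ℂ) * q ^ kl.2)
      = (c n : ℂ) * q ^ n := by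
  rw [Finset.Nat.sum_antidiagonal_eq_sum_range_succ_mk]
  have hc : (c n : ℂ) = ∑ m ∈ Ico 1 n, (σ 1 m : ℂ) * (σ 1 (n - m) : ℂ) := by
    unfold c
    push_cast
    rfl
  have h1 : ∑ k ∈ range n.succ, ((σ 1 (k, n - k).1 : ℂ) * q ^ (k, n - k).1)
        * ((σ 1 (k, n - k).2 : ℂ) * q ^ (k, n - k).2)
      = ∑ k ∈ Ico 1 n, ((σ 1 k : ℂ) * q ^ k) * ((σ 1 (n - k) : ℂ) * q ^ (n - k)) := by
    simp only
    symm
    apply Finset.sum_subset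
    · intro m hm
      rw [mem_Ico] at hm
      rw [mem_range]
      omega
    · intro m hm hnm
      rw [mem_range] at hm
      rw [mem_Ico] at hnm
      have : m = 0 ∨ m = n := by omega
      rcases this with rfl | rfl <;> simp
  rw [h1, hc, Finset.sum_mul]
  apply Finset.sum_congr rfl
  intro m hm
  rw [mem_Ico] at hm
  have hq : q ^ m * q ^ (n - m) = q ^ n := by
    rw [← pow_add]
    congr 1
    omega
  linear_combination ((σ 1 m : ℂ) * (σ 1 (n - m) : ℂ)) * hq



end Rama2

open Complex Real

/-- `E₂(τ) = 1 - 24 Σ_{n≥1} σ₁(n) qⁿ`, `q = e^{2πiτ}`. -/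
noncomputable def E₂ (τ : ℂ) : ℂ :=
  1 - 24 * ∑' n : ℕ+, (ArithmeticFunction.sigma 1 n : ℂ) * Complex.exp (2 * π * I * τ) ^ (n : ℕ)

/-- `E₄(τ) = 1 + 240 Σ_{n≥1} σ₃(n) qⁿ`, `q = e^{2πiτ}`. -/
noncomputable def E₄ (τ : ℂ) : ℂ :=
  1 + 240 * ∑' n : ℕ+, (ArithmeticFunction.sigma 3 n : ℂ) * Complex.exp (2 * π * I * τ) ^ (n : ℕ)

/-- The Ramanujan identity `(6/(iπ)) E₂' = E₂² - E₄` on the upper half-plane. -/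
theorem ramanujan_E₂' :
    ∀ τ : ℂ, 0 < τ.im → 6 / (I * π) * deriv E₂ τ = E₂ τ ^ 2 - E₄ τ := by
  intro τ hτ
  have hq : ‖Complex.exp (2 * π * I * τ)‖ < 1 := Rama2.norm_q_lt_one hτ
  set q : ℂ := Complex.exp (2 * π * I * τ) with hqdef
  -- summability facts over ℕ
  have hAnorm : Summable (fun n : ℕ => ‖(ArithmeticFunction.sigma 1 n : ℂ) * q ^ n‖) :=
    Summable.congr (Rama2.summable_sigma_mul 1 0 hq) fun n => by rw [pow_zero, one_mul]
  have hA : Summable (fun n : ℕ => (ArithmeticFunction.sigma 1 n : ℂ) * q ^ n) :=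
    hAnorm.of_norm
  have hB : Summable (fun n : ℕ => (ArithmeticFunction.sigma 3 n : ℂ) * q ^ n) :=
    (Summable.congr (Rama2.summable_sigma_mul 3 0 hq) fun n => by
      rw [pow_zero, one_mul]).of_norm
  have hD : Summable (fun n : ℕ => (n : ℂ) * (ArithmeticFunction.sigma 1 n : ℂ) * q ^ n) :=
    (Summable.congr (Rama2.summable_sigma_mul 1 1 hq) fun n => by rw [pow_one]).of_norm
  have hCnorm : Summable (fun n : ℕ => ‖(Rama2.c n : ℂ) * q ^ n‖) := by
    refine Summable.congr
      (summable_norm_sum_mul_antidiagonal_of_summable_norm hAnorm hAnorm) fun n => ?_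
    rw [Rama2.conv_eq q n]
  have hC : Summable (fun n : ℕ => (Rama2.c n : ℂ) * q ^ n) := hCnorm.of_norm
  -- derivative of E₂
  have hder : deriv E₂ τ
      = 0 - 24 * ∑' n : ℕ+, (ArithmeticFunction.sigma 1 (n : ℕ) : ℂ) * (2 * π * I * n)
          * q ^ (n : ℕ) := by
    have h := Rama2.hasDerivAt_E2sum hτ
    have h2 := (hasDerivAt_const τ (1 : ℂ)).sub (h.const_mul (24 : ℂ))
    have hE : HasDerivAt E₂
        (0 - 24 * ∑' n : ℕ+, (ArithmeticFunction.sigma 1 (n : ℕ) : ℂ) * (2 * π * I * n)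
          * q ^ (n : ℕ)) τ := h2
    exact hE.deriv
  -- pnat-to-nat conversions
  have tD : ∑' n : ℕ+, ((n : ℕ) : ℂ) * (ArithmeticFunction.sigma 1 (n : ℕ) : ℂ) * q ^ (n : ℕ)
      = ∑' n : ℕ, (n : ℂ) * (ArithmeticFunction.sigma 1 n : ℂ) * q ^ n :=
    Rama2.tsum_pnat_eq_tsum_nat (fun n : ℕ => (n : ℂ) * (ArithmeticFunction.sigma 1 n : ℂ) * q ^ n)
      (by simp)
  have tA : ∑' n : ℕ+, (ArithmeticFunction.sigma 1 (n : ℕ) : ℂ) * q ^ (n : ℕ)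
      = ∑' n : ℕ, (ArithmeticFunction.sigma 1 n : ℂ) * q ^ n :=
    Rama2.tsum_pnat_eq_tsum_nat (fun n : ℕ => (ArithmeticFunction.sigma 1 n : ℂ) * q ^ n)
      (by simp)
  have tB : ∑' n : ℕ+, (ArithmeticFunction.sigma 3 (n : ℕ) : ℂ) * q ^ (n : ℕ)
      = ∑' n : ℕ, (ArithmeticFunction.sigma 3 n : ℂ) * q ^ n :=
    Rama2.tsum_pnat_eq_tsum_nat (fun n : ℕ => (ArithmeticFunction.sigma 3 n : ℂ) * q ^ n)
      (by simp)
  -- LHS computation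
  have key1 : 6 / (I * π) * deriv E₂ τ
      = -288 * ∑' n : ℕ, (n : ℂ) * (ArithmeticFunction.sigma 1 n : ℂ) * q ^ n := by
    rw [hder]
    have pull : ∑' n : ℕ+, (ArithmeticFunction.sigma 1 (n : ℕ) : ℂ) * (2 * π * I * n)
          * q ^ (n : ℕ)
        = (2 * π * I) * ∑' n : ℕ+, ((n : ℕ) : ℂ) * (ArithmeticFunction.sigma 1 (n : ℕ) : ℂ)
            * q ^ (n : ℕ) := by
      rw [← tsum_mul_left]
      exact tsum_congr fun n => by ring
    rw [pull, tD]
    have hIpi : (I : ℂ) * (π : ℂ) ≠ 0 :=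
      mul_ne_zero I_ne_zero (Complex.ofReal_ne_zero.mpr Real.pi_ne_zero)
    field_simp
    ring
  -- E₂, E₄ values
  have hE2τ : E₂ τ = 1 - 24 * ∑' n : ℕ, (ArithmeticFunction.sigma 1 n : ℂ) * q ^ n := by
    rw [show E₂ τ = 1 - 24 * ∑' n : ℕ+, (ArithmeticFunction.sigma 1 (n : ℕ) : ℂ)
      * q ^ (n : ℕ) from rfl, tA]
  have hE4τ : E₄ τ = 1 + 240 * ∑' n : ℕ, (ArithmeticFunction.sigma 3 n : ℂ) * q ^ n := by
    rw [show E₄ τ = 1 + 240 * ∑' n : ℕ+, (ArithmeticFunction.sigma 3 (n : ℕ) : ℂ)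
      * q ^ (n : ℕ) from rfl, tB]
  -- Cauchy product
  have hAA : (∑' n : ℕ, (ArithmeticFunction.sigma 1 n : ℂ) * q ^ n)
        * (∑' n : ℕ, (ArithmeticFunction.sigma 1 n : ℂ) * q ^ n)
      = ∑' n : ℕ, (Rama2.c n : ℂ) * q ^ n := by
    rw [tsum_mul_tsum_eq_tsum_sum_antidiagonal_of_summable_norm hAnorm hAnorm]
    exact tsum_congr (Rama2.conv_eq q)
  -- main coefficient identity, summed
  have main : 576 * (∑' n : ℕ, (Rama2.c n : ℂ) * q ^ n)
        + 288 * (∑' n : ℕ, (n : ℂ) * (ArithmeticFunction.sigma 1 n : ℂ) * q ^ n)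
      = 240 * (∑' n : ℕ, (ArithmeticFunction.sigma 3 n : ℂ) * q ^ n)
        + 48 * (∑' n : ℕ, (ArithmeticFunction.sigma 1 n : ℂ) * q ^ n) := by
    rw [← tsum_mul_left, ← tsum_mul_left, ← tsum_mul_left, ← tsum_mul_left,
      ← Summable.tsum_add (hC.mul_left 576) (hD.mul_left 288),
      ← Summable.tsum_add (hB.mul_left 240) (hA.mul_left 48)]
    refine tsum_congr fun n => ?_
    rcases Nat.eq_zero_or_pos n with rfl | hn
    · simp [Rama2.c]
    · have hk := RamanujanAux.key n hn
      have h1 : ((Rama2.c n : ℕ) : ℤ)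
          = ∑ m ∈ Finset.Ico 1 n, (ArithmeticFunction.sigma 1 m : ℤ)
              * (ArithmeticFunction.sigma 1 (n - m) : ℤ) := by
        unfold Rama2.c
        push_cast
        rfl
      rw [← h1] at hk
      have hkC : (576 : ℂ) * (Rama2.c n : ℂ) + 288 * (n : ℂ) * (ArithmeticFunction.sigma 1 n : ℂ)
          = 240 * (ArithmeticFunction.sigma 3 n : ℂ)
            + 48 * (ArithmeticFunction.sigma 1 n : ℂ) := by
        exact_mod_cast hk
      linear_combination q ^ n * hkC
  rw [key1, hE2τ, hE4τ]
  linear_combination -main - 576 * hAA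
end

section
/- Let r be a rational number and suppose two linearly independent solutions y₁, y₂ of y'' + π² r² E₄ y = 0 on the upper half-plane are both modular forms of weights k₁ and k₂ respectively for a common finite-index subgroup Γ ⊆ SL(2,ℤ). If h = y₂/y₁ is a non-constant ρ-equivariant function for a 2-dimensional representation ρ of SL(2,ℤ), then h is a modular function (weight 0) for Γ, and in particular k₁ = k₂. -/
open Complex Real MatrixGroups Matrix

/-- The Möbius action of `γ ∈ SL(2,ℤ)` on a point of the complex upper
half-plane, written on `ℂ`. -/
noncomputable def slAct (γ : Matrix.SpecialLinearGroup (Fin 2) ℤ) (τ : ℂ) : ℂ :=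
  (((γ : Matrix (Fin 2) (Fin 2) ℤ) 0 0 : ℂ) * τ + ((γ : Matrix (Fin 2) (Fin 2) ℤ) 0 1 : ℂ)) /
    (((γ : Matrix (Fin 2) (Fin 2) ℤ) 1 0 : ℂ) * τ + ((γ : Matrix (Fin 2) (Fin 2) ℤ) 1 1 : ℂ))

/-- The automorphy factor `cτ + d` of `γ` at `τ`. -/
noncomputable def jFac (γ : Matrix.SpecialLinearGroup (Fin 2) ℤ) (τ : ℂ) : ℂ :=
  ((γ : Matrix (Fin 2) (Fin 2) ℤ) 1 0 : ℂ) * τ + ((γ : Matrix (Fin 2) (Fin 2) ℤ) 1 1 : ℂ)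

/-- The Möbius action of a `2 × 2` complex matrix on a complex number. -/
noncomputable def moebius (M : Matrix (Fin 2) (Fin 2) ℂ) (z : ℂ) : ℂ :=
  (M 0 0 * z + M 0 1) / (M 1 0 * z + M 1 1)

lemma jFac_ne_zero (γ : SL(2, ℤ)) (τ : ℂ) (hτ : τ.im ≠ 0) : jFac γ τ ≠ 0 := by
  intro h0
  have him : ((γ : Matrix (Fin 2) (Fin 2) ℤ) 1 0 : ℝ) * τ.im = 0 := by
    have := congrArg Complex.im h0
    simpa [jFac] using this
  have hc : ((γ : Matrix (Fin 2) (Fin 2) ℤ) 1 0) = 0 := by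
    rcases mul_eq_zero.mp him with hh | hh
    · exact_mod_cast hh
    · exact absurd hh hτ
  have hd : ((γ : Matrix (Fin 2) (Fin 2) ℤ) 1 1) = 0 := by
    rw [jFac, hc] at h0
    exact_mod_cast by simpa using h0
  have hdet := γ.prop
  rw [Matrix.det_fin_two] at hdet
  rw [hc, hd] at hdet
  simp at hdet

lemma slAct_im (γ : SL(2, ℤ)) (τ : ℂ) :
    (slAct γ τ).im = τ.im / Complex.normSq (jFac γ τ) := by
  have hdet : ((γ : Matrix (Fin 2) (Fin 2) ℤ) 0 0 : ℝ) * ((γ : Matrix (Fin 2) (Fin 2) ℤ) 1 1 : ℝ)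
      - ((γ : Matrix (Fin 2) (Fin 2) ℤ) 0 1 : ℝ) * ((γ : Matrix (Fin 2) (Fin 2) ℤ) 1 0 : ℝ) = 1 := by
    have := γ.prop
    rw [Matrix.det_fin_two] at this
    exact_mod_cast this
  unfold slAct jFac
  rw [Complex.div_im, div_sub_div_same]
  congr 1
  simp only [Complex.add_im, Complex.add_re, Complex.mul_im, Complex.mul_re,
    Complex.intCast_re, Complex.intCast_im]
  linear_combination τ.im * hdet

def Tmat (n : ℤ) : SL(2, ℤ) := ⟨!![1, n; 0, 1], by simp [Matrix.det_fin_two_of]⟩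
def Lmat (n : ℤ) : SL(2, ℤ) := ⟨!![1, 0; n, 1], by simp [Matrix.det_fin_two_of]⟩

lemma Tmat_mul (a b : ℤ) : Tmat a * Tmat b = Tmat (a + b) := by
  ext i j
  rw [Matrix.SpecialLinearGroup.coe_mul]
  fin_cases i <;> fin_cases j <;> simp [Tmat, Matrix.mul_fin_two, add_comm]

lemma Lmat_mul (a b : ℤ) : Lmat a * Lmat b = Lmat (a + b) := by
  ext i j
  rw [Matrix.SpecialLinearGroup.coe_mul]
  fin_cases i <;> fin_cases j <;> simp [Lmat, Matrix.mul_fin_two, add_comm]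

lemma Tmat_zero : Tmat 0 = 1 := by
  ext i j
  fin_cases i <;> fin_cases j <;> simp [Tmat]

lemma Lmat_zero : Lmat 0 = 1 := by
  ext i j
  fin_cases i <;> fin_cases j <;> simp [Lmat]

lemma jFac_Tmat (n : ℤ) (τ : ℂ) : jFac (Tmat n) τ = 1 := by
  simp [jFac, Tmat]

lemma slAct_Tmat (n : ℤ) (τ : ℂ) : slAct (Tmat n) τ = τ + n := by
  simp [slAct, Tmat]

lemma jFac_Lmat (n : ℤ) (τ : ℂ) : jFac (Lmat n) τ = n * τ + 1 := by
  simp [jFac, Lmat]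

lemma exists_ne_zero_mem (Γ : Subgroup SL(2, ℤ)) [Γ.FiniteIndex]
    (g : ℤ → SL(2, ℤ)) (hadd : ∀ a b, g a * g b = g (a + b)) (h0 : g 0 = 1) :
    ∃ n ≠ 0, g n ∈ Γ := by
  obtain ⟨a, b, hne, heq⟩ := Finite.exists_ne_map_eq_of_infinite
    (fun n : ℤ => (QuotientGroup.mk (g n) : SL(2, ℤ) ⧸ Γ))
  have hinv : (g a)⁻¹ = g (-a) := by
    apply inv_eq_of_mul_eq_one_right
    rw [hadd, add_neg_cancel, h0]
  refine ⟨b - a, sub_ne_zero.mpr (Ne.symm hne), ?_⟩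
  have := QuotientGroup.eq.mp heq
  rwa [hinv, hadd, neg_add_eq_sub] at this

lemma abs_eq_of_zpow_eq {u v : ℂ} {m : ℤ} (hm : m ≠ 0) (hv : v ≠ 0)
    (huv : u ^ m = v ^ m) : ‖u‖ = ‖v‖ := by
  have hv' : ‖v‖ ≠ 0 := by simpa using hv
  have h1 : (‖u‖ / ‖v‖) ^ m = 1 := by
    rw [div_zpow, ← Complex.norm_zpow, ← Complex.norm_zpow, huv, div_self]
    simpa [Complex.norm_zpow] using zpow_ne_zero m hv'
  by_contra hne
  have hne' : ‖u‖ / ‖v‖ ≠ 1 :=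
    fun hd => hne ((div_eq_one_iff_eq hv').mp hd)
  exact hm ((zpow_eq_one_iff_right₀ (by positivity) hne').mp h1)

/-- If two linearly independent solutions `y₁, y₂` of `y'' + π²r²E₄y = 0` are
modular of weights `k₁, k₂` for a finite-index subgroup `Γ`, and `h = y₂/y₁` is a
non-constant `ρ`-equivariant function, then `h` is a modular function (weight 0)
for `Γ`; in particular `k₁ = k₂`. -/
theorem modular_solutions_same_weight
    (r : ℚ) (E₄ y₁ y₂ : ℂ → ℂ) (U : Set ℂ) (hU : U = {τ : ℂ | 0 < τ.im})
    (hode₁ : ∀ τ ∈ U, deriv (deriv y₁) τ + π ^ 2 * (r : ℂ) ^ 2 * E₄ τ * y₁ τ = 0)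
    (hode₂ : ∀ τ ∈ U, deriv (deriv y₂) τ + π ^ 2 * (r : ℂ) ^ 2 * E₄ τ * y₂ τ = 0)
    (hindep : ∀ a b : ℂ, (∀ τ ∈ U, a * y₁ τ + b * y₂ τ = 0) → a = 0 ∧ b = 0)
    (Γ : Subgroup SL(2, ℤ)) (hΓ : Γ.FiniteIndex) (k₁ k₂ : ℤ)
    (hmod₁ : ∀ γ ∈ Γ, ∀ τ ∈ U, y₁ (slAct γ τ) = jFac γ τ ^ k₁ * y₁ τ)
    (hmod₂ : ∀ γ ∈ Γ, ∀ τ ∈ U, y₂ (slAct γ τ) = jFac γ τ ^ k₂ * y₂ τ)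
    (h : ℂ → ℂ) (hh : ∀ τ ∈ U, h τ = y₂ τ / y₁ τ)
    (hnc : ∃ τ₁ ∈ U, ∃ τ₂ ∈ U, h τ₁ ≠ h τ₂)
    (ρ : SL(2, ℤ) →* GL (Fin 2) ℂ)
    (hequiv : ∀ γ : SL(2, ℤ), ∀ τ ∈ U, h (slAct γ τ) = moebius (ρ γ) (h τ)) :
    (∀ γ ∈ Γ, ∀ τ ∈ U, h (slAct γ τ) = h τ) ∧ k₁ = k₂ := by
  haveI := hΓ
  subst hU
  -- Key transformation law for h
  have key : ∀ γ ∈ Γ, ∀ τ : ℂ, 0 < τ.im →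
      h (slAct γ τ) = jFac γ τ ^ (k₂ - k₁) * h τ := by
    intro γ hγ τ hτ
    have hj : jFac γ τ ≠ 0 := jFac_ne_zero γ τ hτ.ne'
    have him : 0 < (slAct γ τ).im := by
      rw [slAct_im γ τ]
      exact div_pos hτ (Complex.normSq_pos.mpr hj)
    rw [hh _ him, hh _ hτ, hmod₁ γ hγ τ hτ, hmod₂ γ hγ τ hτ, mul_div_mul_comm,
      ← zpow_sub₀ hj]
  -- a translation element in Γ
  obtain ⟨n, hn0, hnΓ⟩ := exists_ne_zero_mem Γ Tmat Tmat_mul Tmat_zero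
  -- a lower-triangular element in Γ with nonzero lower-left entry
  obtain ⟨c₀, hc0, hcΓ⟩ := exists_ne_zero_mem Γ Lmat Lmat_mul Lmat_zero
  have hperiod : ∀ τ : ℂ, 0 < τ.im → h (τ + n) = h τ := by
    intro τ hτ
    have := key _ hnΓ τ hτ
    rwa [slAct_Tmat, jFac_Tmat, _root_.one_zpow, one_mul] at this
  -- a point where h is nonzero
  obtain ⟨τ₁, h1, τ₂, h2, hne⟩ := hnc
  obtain ⟨τ₀, hτ₀, hτ₀ne⟩ : ∃ τ₀ : ℂ, 0 < τ₀.im ∧ h τ₀ ≠ 0 := by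
    by_cases hz : h τ₁ = 0
    · exact ⟨τ₂, h2, fun hc => hne (by rw [hz, hc])⟩
    · exact ⟨τ₁, h1, hz⟩
  have him1 : 0 < (τ₀ + (n : ℂ)).im := by simpa using hτ₀
  have him2 : 0 < (τ₀ + (n : ℂ) + (n : ℂ)).im := by simpa using hτ₀
  have hp1 : h (τ₀ + n) = h τ₀ := hperiod τ₀ hτ₀
  have hp2 : h (τ₀ + n + n) = h τ₀ := (hperiod _ him1).trans hp1
  have comb : ∀ τ : ℂ, 0 < τ.im → h τ = h τ₀ →
      jFac (Lmat c₀) τ ^ (k₂ - k₁) * h τ₀ = moebius (ρ (Lmat c₀)) (h τ₀) := by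
    intro τ hτ hhτ
    have e1 := hequiv (Lmat c₀) τ hτ
    have e2 := key _ hcΓ τ hτ
    rw [hhτ] at e1 e2
    exact e2.symm.trans e1
  have q1 : jFac (Lmat c₀) τ₀ ^ (k₂ - k₁) = jFac (Lmat c₀) (τ₀ + n) ^ (k₂ - k₁) :=
    mul_right_cancel₀ hτ₀ne ((comb τ₀ hτ₀ rfl).trans (comb _ him1 hp1).symm)
  have q2 : jFac (Lmat c₀) τ₀ ^ (k₂ - k₁) = jFac (Lmat c₀) (τ₀ + n + n) ^ (k₂ - k₁) :=
    mul_right_cancel₀ hτ₀ne ((comb τ₀ hτ₀ rfl).trans (comb _ him2 hp2).symm)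
  have hm0 : k₂ - k₁ = 0 := by
    by_contra hm
    set z : ℂ := (c₀ : ℂ) * τ₀ + 1 with hz
    set w : ℂ := (c₀ : ℂ) * (n : ℂ) with hw
    have j0 : jFac (Lmat c₀) τ₀ = z := jFac_Lmat c₀ τ₀
    have j1 : jFac (Lmat c₀) (τ₀ + n) = z + w := by rw [jFac_Lmat]; ring
    have j2 : jFac (Lmat c₀) (τ₀ + n + n) = z + w + w := by rw [jFac_Lmat]; ring
    have hz1 : jFac (Lmat c₀) (τ₀ + n) ≠ 0 := jFac_ne_zero _ _ him1.ne'
    have hz2 : jFac (Lmat c₀) (τ₀ + n + n) ≠ 0 := jFac_ne_zero _ _ him2.ne'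
    have a1 : ‖z‖ = ‖(z + w)‖ := by
      have := abs_eq_of_zpow_eq hm (by rwa [j1] at hz1) (j0 ▸ j1 ▸ q1)
      simpa using this
    have a2 : ‖z‖ = ‖(z + w + w)‖ := by
      have := abs_eq_of_zpow_eq hm (by rwa [j2] at hz2) (j0 ▸ j2 ▸ q2)
      simpa using this
    have n1 : Complex.normSq (z + w) = Complex.normSq z := by
      rw [← Complex.sq_norm, ← Complex.sq_norm z, a1]
    have n2 : Complex.normSq (z + w + w) = Complex.normSq z := by
      rw [← Complex.sq_norm, ← Complex.sq_norm z, a2]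
    have hwne : w ≠ 0 := by
      rw [hw]
      exact mul_ne_zero (Int.cast_ne_zero.mpr hc0) (Int.cast_ne_zero.mpr hn0)
    apply hwne
    simp only [Complex.normSq_apply, Complex.add_re, Complex.add_im] at n1 n2
    have hsum : w.re * w.re + w.im * w.im = 0 := by nlinarith [n1, n2]
    have : Complex.normSq w = 0 := by rw [Complex.normSq_apply]; exact hsum
    exact Complex.normSq_eq_zero.mp this
  constructor
  · intro γ hγ τ hτ
    have := key γ hγ τ hτ
    rwa [hm0, zpow_zero, one_mul] at this
  · omega
end

section
/- The group SL(2,ℤ) has a unique subgroup of index 2, namely the subgroup SL(2,ℤ)² generated by the squares of all its elements. -/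
open MatrixGroups

section Aux

open Matrix ModularGroup

private instance : DecidableEq (SL(2, ZMod 2)) :=
  fun a b => decidable_of_iff (a.1 = b.1) Subtype.ext_iff.symm

private lemma natAbs_emod_lt' (a c : ℤ) (hc : c ≠ 0) : (a % c).natAbs < c.natAbs := by
  have h1 : 0 ≤ a % c := Int.emod_nonneg a hc
  have h2 : a % c < |c| := by
    rcases lt_or_gt_of_ne hc with h | h
    · have := Int.emod_lt_of_pos a (by linarith : (0:ℤ) < -c)
      rw [Int.emod_neg] at this
      rwa [abs_of_neg h]
    · rw [abs_of_pos h]; exact Int.emod_lt_of_pos a h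
  have := Int.natAbs_lt_natAbs_of_nonneg_of_lt h1 h2
  rwa [Int.natAbs_abs] at this

private lemma Tk_entry (k : ℤ) (g : SL(2,ℤ)) :
    ((T ^ k * g : SL(2,ℤ)) : Matrix (Fin 2) (Fin 2) ℤ) 0 0 = g 0 0 + k * g 1 0 := by
  rw [show ((T ^ k * g : SL(2,ℤ)) : Matrix (Fin 2) (Fin 2) ℤ) = ((T ^ k : SL(2,ℤ)) : Matrix (Fin 2) (Fin 2) ℤ) * (g : Matrix (Fin 2) (Fin 2) ℤ) from rfl, coe_T_zpow, Matrix.mul_apply, Fin.sum_univ_two]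
  simp

private lemma S_entry (g : SL(2,ℤ)) :
    ((S * g : SL(2,ℤ)) : Matrix (Fin 2) (Fin 2) ℤ) 1 0 = g 0 0 := by
  rw [show ((S * g : SL(2,ℤ)) : Matrix (Fin 2) (Fin 2) ℤ) = ((S : SL(2,ℤ)) : Matrix (Fin 2) (Fin 2) ℤ) * (g : Matrix (Fin 2) (Fin 2) ℤ) from rfl, Matrix.mul_apply, Fin.sum_univ_two]
  simp [S]

private lemma S_sq : (S ^ 2 : SL(2,ℤ)) = -1 := by
  ext i j
  fin_cases i <;> fin_cases j <;>
    simp [S, pow_two, SpecialLinearGroup.coe_mul, Matrix.mul_apply, Fin.sum_univ_two] <;> rfl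

private lemma ST_cube : ((S * T) ^ 3 : SL(2,ℤ)) = S ^ 2 := by
  ext i j
  fin_cases i <;> fin_cases j <;>
    simp [S, T, pow_succ, SpecialLinearGroup.coe_mul, Matrix.mul_apply, Fin.sum_univ_two] <;> rfl

private lemma mem_closure_S_T (g : SL(2,ℤ)) :
    g ∈ Subgroup.closure ({S, T} : Set SL(2,ℤ)) := by
  set H := Subgroup.closure ({S, T} : Set SL(2,ℤ)) with hH
  have hS : S ∈ H := Subgroup.subset_closure (by simp)
  have hT : T ∈ H := Subgroup.subset_closure (by simp)
  generalize hn : (g 1 0).natAbs = n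
  induction n using Nat.strong_induction_on generalizing g with
  | _ n ih =>
    rcases eq_or_ne (g 1 0) 0 with hc | hc
    · have hdet : g 0 0 * g 1 1 - g 0 1 * g 1 0 = 1 := by
        rw [← Matrix.det_fin_two]; exact g.2
      rw [hc, mul_zero, sub_zero] at hdet
      rcases Int.mul_eq_one_iff_eq_one_or_neg_one.mp hdet with ⟨ha, hd⟩ | ⟨ha, hd⟩
      · have hg : g = T ^ (g 0 1) := by
          ext i j
          rw [coe_T_zpow]
          fin_cases i <;> fin_cases j <;> simp [ha, hd, hc]
        rw [hg]; exact Subgroup.zpow_mem H hT _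
      · have hg : g = S ^ 2 * T ^ (-(g 0 1)) := by
          rw [S_sq, neg_one_mul]
          ext i j
          rw [SpecialLinearGroup.coe_neg, coe_T_zpow]
          fin_cases i <;> fin_cases j <;> simp [ha, hd, hc]
        rw [hg]
        exact Subgroup.mul_mem H (Subgroup.pow_mem H hS 2) (Subgroup.zpow_mem H hT _)
    · set a : ℤ := g 0 0 with ha
      set c : ℤ := g 1 0 with hcdef
      set h : SL(2,ℤ) := S * (T ^ (-(a / c)) * g) with hdefh
      have h10 : h 1 0 = a % c := by
        show ((h : SL(2,ℤ)) : Matrix (Fin 2) (Fin 2) ℤ) 1 0 = a % c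
        rw [hdefh, S_entry, Tk_entry]
        rw [Int.emod_def]; ring
      have hlt : (h 1 0).natAbs < n := by
        rw [h10, ← hn]; exact natAbs_emod_lt' a c hc
      have hmem : h ∈ H := ih _ hlt h rfl
      have hg : g = T ^ (a / c) * (S⁻¹ * h) := by
        rw [hdefh]; group
      rw [hg]
      exact Subgroup.mul_mem H (Subgroup.zpow_mem H hT _)
        (Subgroup.mul_mem H (Subgroup.inv_mem H hS) hmem)

private def c2 : SL(2, ZMod 2) := ⟨!![0,1;1,1], by decide⟩

private lemma A'mul : ∀ a b : SL(2, ZMod 2), a ∈ ({1, c2, c2 * c2} : Set _) →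
    b ∈ ({1, c2, c2 * c2} : Set _) → a * b ∈ ({1, c2, c2 * c2} : Set _) := by
  simp only [Set.mem_insert_iff, Set.mem_singleton_iff]; decide

private lemma A'inv : ∀ a : SL(2, ZMod 2), a ∈ ({1, c2, c2 * c2} : Set _) →
    a⁻¹ ∈ ({1, c2, c2 * c2} : Set _) := by
  simp only [Set.mem_insert_iff, Set.mem_singleton_iff]; decide

private def A' : Subgroup SL(2, ZMod 2) where
  carrier := {1, c2, c2 * c2}
  one_mem' := by left; rfl
  mul_mem' := fun {a b} ha hb => A'mul a b ha hb
  inv_mem' := fun {a} ha => A'inv a ha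

private lemma mem_A'_iff (x : SL(2, ZMod 2)) :
    x ∈ A' ↔ x ∈ ({1, c2, c2 * c2} : Set _) := Iff.rfl

private lemma sq_mem_A' (g : SL(2, ZMod 2)) : g ^ 2 ∈ A' := by
  rw [mem_A'_iff]
  simp only [Set.mem_insert_iff, Set.mem_singleton_iff]
  revert g; decide

private def pi2 : SL(2, ℤ) →* SL(2, ZMod 2) :=
  Matrix.SpecialLinearGroup.map (Int.castRingHom (ZMod 2))

private lemma S_not_in : pi2 S ∉ A' := by
  rw [mem_A'_iff]
  simp only [Set.mem_insert_iff, Set.mem_singleton_iff]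
  decide

end Aux

/-- `SL(2,ℤ)` has a unique subgroup of index 2, namely the subgroup generated by
the squares of all its elements. -/
theorem unique_index_two_subgroup_SL2Z :
    (Subgroup.closure {x : SL(2, ℤ) | ∃ g : SL(2, ℤ), x = g ^ 2}).index = 2 ∧
    ∀ Γ : Subgroup SL(2, ℤ), Γ.index = 2 →
      Γ = Subgroup.closure {x : SL(2, ℤ) | ∃ g : SL(2, ℤ), x = g ^ 2} := by
  set N := Subgroup.closure {x : SL(2, ℤ) | ∃ g : SL(2, ℤ), x = g ^ 2} with hNdef
  -- N is normal
  haveI hNormal : N.Normal := by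
    constructor
    intro x hx c
    induction hx using Subgroup.closure_induction with
    | mem y hy =>
      obtain ⟨g, rfl⟩ := hy
      exact Subgroup.subset_closure ⟨c * g * c⁻¹, by rw [conj_pow]⟩
    | one => simpa using N.one_mem
    | mul y z hy hz hcy hcz =>
      have : c * (y * z) * c⁻¹ = (c * y * c⁻¹) * (c * z * c⁻¹) := by group
      rw [this]; exact N.mul_mem hcy hcz
    | inv y hy hcy =>
      have : c * y⁻¹ * c⁻¹ = (c * y * c⁻¹)⁻¹ := by group
      rw [this]; exact N.inv_mem hcy
  -- ModularGroup.S is not in N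
  have hSN : ModularGroup.S ∉ N := by
    intro hS
    apply S_not_in
    have hle : N ≤ A'.comap pi2 := by
      rw [hNdef]
      apply Subgroup.closure_le _ |>.mpr
      rintro x ⟨g, rfl⟩
      show pi2 (g ^ 2) ∈ A'
      rw [map_pow]
      exact sq_mem_A' (pi2 g)
    exact hle hS
  -- quotient facts
  set φ := QuotientGroup.mk' N with hφ
  have sq1 : ∀ x : SL(2,ℤ) ⧸ N, x ^ 2 = 1 := by
    intro x
    induction x using QuotientGroup.induction_on with
    | H g =>
      show φ g ^ 2 = 1
      rw [← map_pow, ← MonoidHom.mem_ker, QuotientGroup.ker_mk']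
      exact Subgroup.subset_closure ⟨g, rfl⟩
  have hTS : φ ModularGroup.T = φ ModularGroup.S := by
    have h3 : (φ ModularGroup.S * φ ModularGroup.T) ^ 3 = 1 := by
      rw [← map_mul, ← map_pow, ST_cube, map_pow]
      have := sq1 (φ ModularGroup.S); simpa using this
    have h2 : (φ ModularGroup.S * φ ModularGroup.T) ^ 2 = 1 := sq1 _
    have hST : φ ModularGroup.S * φ ModularGroup.T = 1 := by
      have : (φ ModularGroup.S * φ ModularGroup.T) ^ 3 = (φ ModularGroup.S * φ ModularGroup.T) ^ 2 * (φ ModularGroup.S * φ ModularGroup.T) := by rw [pow_succ]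
      rw [this, h2, one_mul] at h3
      exact h3
    have hSinv : (φ ModularGroup.S)⁻¹ = φ ModularGroup.S := by
      have := sq1 (φ ModularGroup.S)
      rw [pow_two] at this
      exact inv_eq_of_mul_eq_one_right this
    calc φ ModularGroup.T = (φ ModularGroup.S)⁻¹ * (φ ModularGroup.S * φ ModularGroup.T) := by group
    _ = φ ModularGroup.S := by rw [hST, mul_one, hSinv]
  have covered : ∀ g : SL(2,ℤ), φ g = 1 ∨ φ g = φ ModularGroup.S := by
    intro g
    induction mem_closure_S_T g using Subgroup.closure_induction with
    | mem y hy =>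
      rcases hy with rfl | rfl
      · right; rfl
      · right; exact hTS
    | one => left; exact map_one φ
    | mul y z _ _ hy hz =>
      rw [map_mul]
      rcases hy with h | h <;> rcases hz with h' | h' <;> rw [h, h']
      · left; rw [one_mul]
      · right; rw [one_mul]
      · right; rw [mul_one]
      · left; rw [← pow_two]; exact sq1 _
    | inv y _ hy =>
      rw [map_inv]
      rcases hy with h | h <;> rw [h]
      · left; exact inv_one
      · right
        have := sq1 (φ ModularGroup.S)
        rw [pow_two] at this
        exact inv_eq_of_mul_eq_one_right this
  have hindex : N.index = 2 := by
    have hne : (1 : SL(2,ℤ) ⧸ N) ≠ φ ModularGroup.S := by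
      intro h
      apply hSN
      have : φ ModularGroup.S = 1 := h.symm
      rwa [← MonoidHom.mem_ker, QuotientGroup.ker_mk'] at this
    have : Nat.card (SL(2,ℤ) ⧸ N) = 2 := by
      rw [Nat.card_eq_two_iff]
      refine ⟨1, φ ModularGroup.S, hne, ?_⟩
      apply Set.eq_univ_iff_forall.mpr
      intro x
      induction x using QuotientGroup.induction_on with
      | H g =>
        show φ g ∈ ({1, φ ModularGroup.S} : Set _)
        rcases covered g with h | h <;> rw [h] <;> simp
    exact this
  refine ⟨hindex, fun Γ hΓ => ?_⟩
  have hle : N ≤ Γ := by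
    rw [hNdef]
    apply Subgroup.closure_le _ |>.mpr
    rintro x ⟨g, rfl⟩
    exact Subgroup.sq_mem_of_index_two hΓ g
  have hrel : N.relIndex Γ * Γ.index = N.index := Subgroup.relIndex_mul_index hle
  rw [hΓ, hindex] at hrel
  have : N.relIndex Γ = 1 := by omega
  exact le_antisymm (Subgroup.relIndex_eq_one.mp this) hle
end
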